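/- Let k ≥ 2 and q = k−1. Let α : Fin k → ℝ with α j > 0 for all j and ∑ j, α j = 1. Let t, t' : Fin k → (Fin q → ℝ) be two families of group centers whose last center is the zero vector (t k₀ = 0 and t' k₀ = 0 for the last index k₀) and such that the q×q matrices whose columns are the first k−1 centers t 0, …, t (k−2) (respectively t' 0, …, t' (k−2)) are invertible. Let μ = ∑ j, α j • δ_{t j} and μ' = ∑ j, α j • δ_{t' j} be the corresponding Dirac-mixture probability measures on Fin q → ℝ. Let V₁, V₂ be maps from measures on Fin q → ℝ to q×q real matrices that are affine equivariant at μ and μ' (i.e., for every invertible q×q matrix A and every b ∈ ℝ^q, Vᵢ of the pushforward of μ (resp. μ') under x ↦ A.mulVec x + b equals A * Vᵢ(μ) * Aᵀ, for i = 1, 2), and assume V₁ μ and V₁ μ' are invertible. Then the matrices (V₁ μ)⁻¹ * (V₂ μ) and (V₁ μ')⁻¹ * (V₂ μ') have the same characteristic polynomial (hence the same eigenvalues). -/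

import Mathlib

open MeasureTheory Matrix Polynomial

lemma my_charpoly_conj {n : Type*} [Fintype n] [DecidableEq n]
    (P M : Matrix n n ℝ) (hP : IsUnit P) :
    (P * M * P⁻¹).charpoly = M.charpoly := by
  have hdet : IsUnit P.det := (Matrix.isUnit_iff_isUnit_det P).1 hP
  have hPP : (C : ℝ →+* ℝ[X]).mapMatrix P * (C : ℝ →+* ℝ[X]).mapMatrix P⁻¹ = 1 := by
    rw [← _root_.map_mul, Matrix.mul_nonsing_inv _ hdet, _root_.map_one]
  have hPP' : (C : ℝ →+* ℝ[X]).mapMatrix P⁻¹ * (C : ℝ →+* ℝ[X]).mapMatrix P = 1 := by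
    rw [← _root_.map_mul, Matrix.nonsing_inv_mul _ hdet, _root_.map_one]
  have hcomm := Matrix.scalar_commute (n := n) (X : ℝ[X]) (fun r' => Commute.all _ _)
    ((C : ℝ →+* ℝ[X]).mapMatrix P⁻¹)
  have hch : charmatrix (P * M * P⁻¹) =
      (C : ℝ →+* ℝ[X]).mapMatrix P * charmatrix M * (C : ℝ →+* ℝ[X]).mapMatrix P⁻¹ := by
    simp only [charmatrix, mul_sub, sub_mul, _root_.map_mul]
    congr 1
    rw [mul_assoc, hcomm.eq, ← mul_assoc, hPP, one_mul]
  rw [Matrix.charpoly, hch]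
  rw [show (C : ℝ →+* ℝ[X]).mapMatrix P * charmatrix M * (C : ℝ →+* ℝ[X]).mapMatrix P⁻¹
    = (C : ℝ →+* ℝ[X]).mapMatrix P * (charmatrix M * (C : ℝ →+* ℝ[X]).mapMatrix P⁻¹) from
    mul_assoc _ _ _, det_mul, det_mul, mul_comm, mul_assoc, ← det_mul, hPP', det_one, mul_one,
    Matrix.charpoly]

lemma my_charpoly_conj' {n : Type*} [Fintype n] [DecidableEq n]
    (P M : Matrix n n ℝ) (hP : IsUnit P) :
    (P⁻¹ * M * P).charpoly = M.charpoly := by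
  have h := my_charpoly_conj P⁻¹ M (Matrix.isUnit_nonsing_inv_iff.2 hP)
  rwa [Matrix.nonsing_inv_nonsing_inv _ ((Matrix.isUnit_iff_isUnit_det P).1 hP)] at h

lemma my_map_finset_sum {α β ι : Type*} [MeasurableSpace α] [MeasurableSpace β]
    (s : Finset ι) (m : ι → Measure α) {f : α → β} (hf : Measurable f) :
    (∑ j ∈ s, m j).map f = ∑ j ∈ s, (m j).map f := by
  classical
  induction s using Finset.induction_on with
  | empty => simp
  | @insert _ _ hj ih =>
    rw [Finset.sum_insert hj, Finset.sum_insert hj, Measure.map_add _ _ hf, ih]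

/-- For a Dirac mixture with full-rank group centers matrix (`q = k − 1`), the ICS
eigenvalues for any pair of affine equivariant scatter functionals do not depend on the
group centers, only on the mixture proportions: two such mixtures with the same
proportions give `V₁⁻¹V₂` matrices with the same characteristic polynomial. -/
theorem ics_eigenvalues_depend_only_on_proportions
    (k : ℕ) (hk : 2 ≤ k) (q : ℕ) (hq : q = k - 1)
    (α : Fin k → ℝ) (hα : ∀ j, 0 < α j) (hsum : ∑ j, α j = 1)
    (t t' : Fin k → (Fin q → ℝ))
    (hlast : t ⟨k - 1, by omega⟩ = 0) (hlast' : t' ⟨k - 1, by omega⟩ = 0)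
    (hT : IsUnit (Matrix.of fun i j : Fin q => t (Fin.castLE (by omega) j) i))
    (hT' : IsUnit (Matrix.of fun i j : Fin q => t' (Fin.castLE (by omega) j) i))
    (μ μ' : Measure (Fin q → ℝ))
    (hμ : μ = ∑ j, ENNReal.ofReal (α j) • Measure.dirac (t j))
    (hμ' : μ' = ∑ j, ENNReal.ofReal (α j) • Measure.dirac (t' j))
    (V₁ V₂ : Measure (Fin q → ℝ) → Matrix (Fin q) (Fin q) ℝ)
    (hV₁μ : ∀ A : Matrix (Fin q) (Fin q) ℝ, IsUnit A → ∀ b : Fin q → ℝ,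
      V₁ (μ.map (fun x => A.mulVec x + b)) = A * V₁ μ * Aᵀ)
    (hV₂μ : ∀ A : Matrix (Fin q) (Fin q) ℝ, IsUnit A → ∀ b : Fin q → ℝ,
      V₂ (μ.map (fun x => A.mulVec x + b)) = A * V₂ μ * Aᵀ)
    (hV₁μ' : ∀ A : Matrix (Fin q) (Fin q) ℝ, IsUnit A → ∀ b : Fin q → ℝ,
      V₁ (μ'.map (fun x => A.mulVec x + b)) = A * V₁ μ' * Aᵀ)
    (hV₂μ' : ∀ A : Matrix (Fin q) (Fin q) ℝ, IsUnit A → ∀ b : Fin q → ℝ,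
      V₂ (μ'.map (fun x => A.mulVec x + b)) = A * V₂ μ' * Aᵀ)
    (hinv : IsUnit (V₁ μ)) (hinv' : IsUnit (V₁ μ')) :
    ((V₁ μ)⁻¹ * V₂ μ).charpoly = ((V₁ μ')⁻¹ * V₂ μ').charpoly := by
  set T : Matrix (Fin q) (Fin q) ℝ :=
    Matrix.of fun i j : Fin q => t (Fin.castLE (by omega) j) i with hTdef
  set T' : Matrix (Fin q) (Fin q) ℝ :=
    Matrix.of fun i j : Fin q => t' (Fin.castLE (by omega) j) i with hT'def
  set A : Matrix (Fin q) (Fin q) ℝ := T' * T⁻¹ with hAdef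
  have hTdet : IsUnit T.det := (Matrix.isUnit_iff_isUnit_det T).1 hT
  have hA : IsUnit A := hT'.mul (Matrix.isUnit_nonsing_inv_iff.2 hT)
  have hAT : A * T = T' := by
    rw [hAdef, mul_assoc, Matrix.nonsing_inv_mul _ hTdet, mul_one]
  -- the affine map sends the centers t to the centers t'
  have key : ∀ j : Fin k, A.mulVec (t j) + 0 = t' j := by
    intro j
    rcases lt_or_ge (j : ℕ) q with h | h
    · have hcast : Fin.castLE (show q ≤ k by omega) ⟨(j : ℕ), h⟩ = j := Fin.ext rfl
      funext i
      have h1 : ∀ l : Fin q, T l ⟨(j : ℕ), h⟩ = t j l := fun l => by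
        simp only [hTdef, Matrix.of_apply, hcast]
      have h2 : T' i ⟨(j : ℕ), h⟩ = t' j i := by
        simp only [hT'def, Matrix.of_apply, hcast]
      have := congrFun (congrFun hAT i) ⟨(j : ℕ), h⟩
      simp only [Matrix.mul_apply, h1] at this
      simpa [Matrix.mulVec, dotProduct, h2] using this
    · have hj : j = ⟨k - 1, by omega⟩ := Fin.ext (by
        have := j.isLt; simp only []; omega)
      rw [hj]
      simp [hlast, hlast']
  have hf : Measurable (fun x : Fin q → ℝ => A.mulVec x + 0) := by
    exact (A.mulVecLin.continuous_of_finiteDimensional.measurable).add_const 0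
  have hmap : μ.map (fun x => A.mulVec x + 0) = μ' := by
    rw [hμ, hμ', my_map_finset_sum _ _ hf]
    refine Finset.sum_congr rfl fun j _ => ?_
    rw [Measure.map_smul, Measure.map_dirac' hf, key j]
  have e₁ : V₁ μ' = A * V₁ μ * Aᵀ := by rw [← hmap, hV₁μ A hA 0]
  have e₂ : V₂ μ' = A * V₂ μ * Aᵀ := by rw [← hmap, hV₂μ A hA 0]
  have hAt : IsUnit Aᵀ := (Matrix.isUnit_iff_isUnit_det _).2
    (by rwa [Matrix.det_transpose, ← Matrix.isUnit_iff_isUnit_det])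
  have hAtdet : IsUnit Aᵀ.det := (Matrix.isUnit_iff_isUnit_det _).1 hAt
  have hAdet : IsUnit A.det := (Matrix.isUnit_iff_isUnit_det _).1 hA
  have hconj : (V₁ μ')⁻¹ * V₂ μ' = Aᵀ⁻¹ * ((V₁ μ)⁻¹ * V₂ μ) * Aᵀ := by
    rw [e₁, e₂, Matrix.mul_inv_rev, Matrix.mul_inv_rev]
    simp only [mul_assoc]
    rw [Matrix.nonsing_inv_mul_cancel_left _ _ hAdet]
  rw [hconj]
  exact (my_charpoly_conj' Aᵀ _ hAt).symm
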